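/- Let B be a Boolean algebra, k ≥ 1 and μ a cardinal. Suppose there is a sequence ⟨y_j : j < μ⟩ in B such that for every k-element subset w of μ there is an ultrafilter D on B with: y_j ∈ D iff j ∈ w (for all j < μ). Then the sequence ⟨(y_j, -y_j) : j < μ⟩ is a (2k+1)-independent family in B × B; in particular ind^+_{2k+1}(B × B) > μ. -/

import Mathlib

open Cardinal

/-- A family `f : J → A` in a Boolean algebra is `m`-independent: `f` is
injective and every Boolean combination of `m` distinct members (with
arbitrary complementation pattern) is nonzero. -/
def NIndepFam {J : Type v} {A : Type u} [BooleanAlgebra A] (m : ℕ) (f : J → A) : Prop :=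
  Function.Injective f ∧
    ∀ s t : Finset J, Disjoint s t → s.card + t.card = m →
      (s.inf f) ⊓ (t.inf fun j => (f j)ᶜ) ≠ ⊥

lemma inf_fst {J : Type*} {A C : Type u} [BooleanAlgebra A] [BooleanAlgebra C]
    (s : Finset J) (g : J → A × C) : (s.inf g).1 = s.inf (fun j => (g j).1) := by
  induction s using Finset.cons_induction with
  | empty => rfl
  | cons a s ha ih => simp [ih]

lemma inf_snd {J : Type*} {A C : Type u} [BooleanAlgebra A] [BooleanAlgebra C]
    (s : Finset J) (g : J → A × C) : (s.inf g).2 = s.inf (fun j => (g j).2) := by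
  induction s using Finset.cons_induction with
  | empty => rfl
  | cons a s ha ih => simp [ih]

lemma extend_finset {J : Type*} [Infinite J] [DecidableEq J] (s t : Finset J)
    (h : Disjoint s t) (k : ℕ) (hs : s.card ≤ k) :
    ∃ w : Finset J, s ⊆ w ∧ w.card = k ∧ Disjoint w t := by
  obtain ⟨u, hu, hcard⟩ := Infinite.exists_superset_card_eq (s ∪ t) (k + t.card)
    (by rw [Finset.card_union_of_disjoint h]; omega)
  refine ⟨u \ t, ?_, ?_, Finset.sdiff_disjoint⟩
  · intro x hx
    exact Finset.mem_sdiff.mpr ⟨hu (Finset.mem_union_left _ hx),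
      fun hxt => (Finset.disjoint_left.mp h hx) hxt⟩
  · rw [Finset.card_sdiff_of_subset (fun x hx => hu (Finset.mem_union_right _ hx)), hcard]
    omega

/-- If `⟨y_j : j < μ⟩` is a sequence in `B` such that for every `k`-element
subset `w` of `μ` there is an ultrafilter `D` on `B` (here: a bounded lattice
homomorphism `B → Bool`) with `y_j ∈ D ↔ j ∈ w`, then
`⟨(y_j, -y_j) : j < μ⟩` is a `(2k+1)`-independent family in `B × B`;
in particular `ind⁺_{2k+1}(B × B) > μ`. -/
theorem stmt13 {B : Type u} [BooleanAlgebra B] (k : ℕ) (hk : 1 ≤ k)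
    (μ : Cardinal.{u}) (hμ : ℵ₀ ≤ μ) (y : μ.ord.ToType → B)
    (hy : ∀ w : Finset μ.ord.ToType, w.card = k →
      ∃ f : BoundedLatticeHom B Bool, ∀ j, f (y j) = true ↔ j ∈ w) :
    NIndepFam (2 * k + 1) (fun j : μ.ord.ToType => ((y j, (y j)ᶜ) : B × B)) := by
  classical
  have hinf : Infinite μ.ord.ToType := by
    rw [Cardinal.infinite_iff, Cardinal.mk_ord_toType]
    exact hμ
  constructor
  · intro j j' hjj'
    by_contra hne
    have hyy : y j = y j' := congrArg Prod.fst hjj'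
    obtain ⟨w, hw, hwcard, hwdisj⟩ := extend_finset {j} {j'}
      (Finset.disjoint_singleton.mpr hne) k (by simpa using hk)
    obtain ⟨f, hf⟩ := hy w hwcard
    have h1 : f (y j) = true := (hf j).mpr (hw (Finset.mem_singleton_self j))
    have h2 : f (y j') ≠ true := fun h =>
      Finset.disjoint_left.mp hwdisj ((hf j').mp h) (Finset.mem_singleton_self j')
    rw [hyy] at h1; exact h2 h1
  · intro s t hst hcard hbot
    rcases le_or_gt s.card k with hs | hs
    · -- use first coordinate, w ⊇ s disjoint from t
      obtain ⟨w, hw, hwcard, hwdisj⟩ := extend_finset s t hst k hs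
      obtain ⟨f, hf⟩ := hy w hwcard
      have h1 : (s.inf fun j => y j) ⊓ (t.inf fun j => (y j)ᶜ) = ⊥ := by
        have h0 := congrArg Prod.fst hbot
        rw [Prod.fst_inf, inf_fst, inf_fst] at h0
        simpa using h0
      have h2 := congrArg f h1
      rw [map_inf, map_finset_inf, map_finset_inf, map_bot] at h2
      have hA : s.inf (⇑f ∘ fun j => y j) = ⊤ :=
        (Finset.inf_eq_top_iff _ _).mpr fun j hj => (hf j).mpr (hw hj)
      have hB : t.inf (⇑f ∘ fun j => (y j)ᶜ) = ⊤ := by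
        refine (Finset.inf_eq_top_iff _ _).mpr fun j hj => ?_
        have hfalse : f (y j) = false := by
          rcases Bool.eq_false_or_eq_true (f (y j)) with h | h
          · exact absurd ((hf j).mp h) fun hjw => Finset.disjoint_left.mp hwdisj hjw hj
          · exact h
        show f ((y j)ᶜ) = ⊤
        rw [map_compl', hfalse]
        rfl
      rw [hA, hB] at h2
      simp at h2
    · -- use second coordinate, w ⊇ t disjoint from s
      obtain ⟨w, hw, hwcard, hwdisj⟩ := extend_finset t s hst.symm k (by omega)
      obtain ⟨f, hf⟩ := hy w hwcard
      have h1 : (s.inf fun j => (y j)ᶜ) ⊓ (t.inf fun j => y j) = ⊥ := by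
        have h0 := congrArg Prod.snd hbot
        rw [Prod.snd_inf, inf_snd, inf_snd] at h0
        simpa using h0
      have h2 := congrArg f h1
      rw [map_inf, map_finset_inf, map_finset_inf, map_bot] at h2
      have hA : s.inf (⇑f ∘ fun j => (y j)ᶜ) = ⊤ := by
        refine (Finset.inf_eq_top_iff _ _).mpr fun j hj => ?_
        have hfalse : f (y j) = false := by
          rcases Bool.eq_false_or_eq_true (f (y j)) with h | h
          · exact absurd ((hf j).mp h) fun hjw => Finset.disjoint_left.mp hwdisj hjw hj
          · exact h
        show f ((y j)ᶜ) = ⊤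
        rw [map_compl', hfalse]
        rfl
      have hB : t.inf (⇑f ∘ fun j => y j) = ⊤ :=
        (Finset.inf_eq_top_iff _ _).mpr fun j hj => (hf j).mpr (hw hj)
      rw [hA, hB] at h2
      simp at h2
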